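/- Let 0 < d_1 < d_2 < ⋯ < d_r be integers, let n_1, …, n_r be positive integers with n = n_1 + ⋯ + n_r, and let Ξ = Z_{d_1}^{n_1} × Z_{d_2}^{n_2} × ⋯ × Z_{d_r}^{n_r} ⊂ ℝ^n. Let Ω = {φ ∈ GL_n(ℝ) : φ(Ξ) = Ξ}. Then every φ ∈ Ω is orthogonal with respect to the standard inner product on ℝ^n; moreover, every φ ∈ Ω preserves each coordinate block corresponding to a factor Z_{d_i}^{n_i} and acts on that block as a signed permutation of its coordinates. Consequently Ω is isomorphic to the direct product over i of the groups of signed n_i × n_i permutation matrices, and |Ω| = ∏_{i=1}^{r} 2^{n_i} · n_i!. -/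

import Mathlib

set_option linter.unusedSectionVars false
set_option linter.unusedVariables false


/-- `Z_d = {-d, -d+2, …, d-2, d} = {k ∈ ℤ : |k| ≤ d, k ≡ d (mod 2)}`, as a subset of `ℝ`. -/
def Zset (d : ℕ) : Set ℝ :=
  {x | ∃ k : ℤ, x = (k : ℝ) ∧ k.natAbs ≤ d ∧ k % 2 = (d : ℤ) % 2}

/-- The product `Z_{a 0} × ⋯ × Z_{a (n-1)}` as a subset of `ℝ^n`.  A product of blocks
`Z_{d_1}^{n_1} × ⋯ × Z_{d_r}^{n_r}` with `0 < d_1 < ⋯ < d_r` corresponds to a monotone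
positive coordinate-bound function `a : Fin n → ℕ`: the blocks are the fibers of `a`. -/
def Zprod {n : ℕ} (a : Fin n → ℕ) : Set (Fin n → ℝ) :=
  {x | ∀ i, x i ∈ Zset (a i)}

/-- A linear automorphism of `ℝ^m` is a signed permutation (matrix) if it sends every
standard basis vector to `±` a standard basis vector. -/
def IsSignedPermMap (m : ℕ) (φ : (Fin m → ℝ) ≃ₗ[ℝ] (Fin m → ℝ)) : Prop :=
  ∀ i, ∃ j, φ (Pi.single i 1) = Pi.single j 1 ∨ φ (Pi.single i 1) = -Pi.single j 1

noncomputable section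
open Finset

/-- sign of a boolean, as a real number -/
def sgn (b : Bool) : ℝ := if b then 1 else -1

lemma sgn_ne_zero (b : Bool) : sgn b ≠ 0 := by cases b <;> norm_num [sgn]

lemma sgn_mul_self (b : Bool) : sgn b * sgn b = 1 := by cases b <;> norm_num [sgn]

lemma sgn_inj {b b' : Bool} (h : sgn b = sgn b') : b = b' := by
  cases b <;> cases b' <;> simp_all [sgn] <;> norm_num at h

variable {ι : Type*} [Fintype ι] [DecidableEq ι]

/-- the signed permutation linear automorphism determined by signs `ε` (attached to
target coordinates) and a permutation `π` (sending source index to target index). -/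
def spEquiv (ε : ι → Bool) (π : Equiv.Perm ι) : (ι → ℝ) ≃ₗ[ℝ] (ι → ℝ) where
  toFun x := fun j => sgn (ε j) * x (π.symm j)
  invFun y := fun i => sgn (ε (π i)) * y (π i)
  map_add' x y := by funext j; simp [Pi.add_apply]; ring
  map_smul' c x := by funext j; simp [Pi.smul_apply, smul_eq_mul]; ring
  left_inv x := by
    funext i
    simp only [Equiv.symm_apply_apply, ← mul_assoc, sgn_mul_self, one_mul]
  right_inv y := by
    funext j
    simp only [Equiv.apply_symm_apply, ← mul_assoc, sgn_mul_self, one_mul]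

lemma spEquiv_apply (ε : ι → Bool) (π : Equiv.Perm ι) (x : ι → ℝ) (j : ι) :
    spEquiv ε π x j = sgn (ε j) * x (π.symm j) := rfl

lemma spEquiv_symm_apply (ε : ι → Bool) (π : Equiv.Perm ι) (y : ι → ℝ) (i : ι) :
    (spEquiv ε π).symm y i = sgn (ε (π i)) * y (π i) := rfl

lemma spEquiv_single (ε : ι → Bool) (π : Equiv.Perm ι) (i : ι) :
    spEquiv ε π (Pi.single i 1) = Pi.single (π i) (sgn (ε (π i))) := by
  funext j
  rw [spEquiv_apply, Pi.single_apply, Pi.single_apply]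
  by_cases h : j = π i
  · rw [if_pos h, if_pos (by rw [h, Equiv.symm_apply_apply]), h, mul_one]
  · rw [if_neg h, if_neg (fun hc => h (by rw [← hc, Equiv.apply_symm_apply])), mul_zero]

lemma single_sgn_or (j : ι) (b : Bool) :
    (Pi.single j (sgn b) : ι → ℝ) = Pi.single j 1 ∨
      (Pi.single j (sgn b) : ι → ℝ) = -Pi.single j 1 := by
  cases b
  · right; funext k; by_cases h : k = j <;> simp [sgn, Pi.single_apply, h]
  · left; simp [sgn]

lemma or_single_sgn {y : ι → ℝ} {j : ι}
    (h : y = Pi.single j 1 ∨ y = -Pi.single j 1) : ∃ b, y = Pi.single j (sgn b) := by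
  rcases h with h | h
  · exact ⟨true, by simp [sgn, h]⟩
  · exact ⟨false, by rw [h]; funext k; by_cases hk : k = j <;> simp [sgn, Pi.single_apply, hk]⟩

/-- if an injective linear map sends two basis vectors into the same line, the indices agree -/
lemma index_inj (φ : (ι → ℝ) ≃ₗ[ℝ] (ι → ℝ)) {i i' j : ι} {c c' : ℝ}
    (hc : c ≠ 0) (hc' : c' ≠ 0)
    (h : φ (Pi.single i 1) = Pi.single j c) (h' : φ (Pi.single i' 1) = Pi.single j c') :
    i = i' := by
  by_contra hne
  have key : φ (c' • (Pi.single i 1 : ι → ℝ) - c • (Pi.single i' 1 : ι → ℝ)) = 0 := by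
    rw [map_sub, map_smul, map_smul, h, h']
    funext k
    simp [Pi.single_apply]
    by_cases hk : k = j <;> simp [hk, mul_comm]
  have h0 : c' • (Pi.single i 1 : ι → ℝ) - c • (Pi.single i' 1 : ι → ℝ) = 0 :=
    φ.injective (by rw [key, map_zero])
  have := congrFun h0 i
  simp [Pi.single_apply, hne, Ne.symm] at this
  tauto

/-- a linear map acting as a (scaled) permutation on the basis has a coordinate formula -/
lemma apply_of_basis (φ : (ι → ℝ) ≃ₗ[ℝ] (ι → ℝ)) (C : ι → ℝ) (π : Equiv.Perm ι)
    (h : ∀ i, φ (Pi.single i 1) = Pi.single (π i) (C i)) (x : ι → ℝ) (k : ι) :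
    φ x k = C (π.symm k) * x (π.symm k) := by
  have hx : x = ∑ i : ι, Pi.single i (x i) := (Finset.univ_sum_single x).symm
  have : φ x = ∑ i : ι, Pi.single (π i) (x i * C i) := by
    conv_lhs => rw [hx]
    rw [map_sum]
    refine Finset.sum_congr rfl fun i _ => ?_
    have : (Pi.single i (x i) : ι → ℝ) = x i • (Pi.single i 1 : ι → ℝ) := by
      funext j; by_cases hj : j = i <;> simp [Pi.single_apply, hj]
    rw [this, map_smul, h i]
    funext j; by_cases hj : j = π i <;> simp [Pi.single_apply, hj, mul_comm]
  rw [this, Finset.sum_apply]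
  rw [Finset.sum_eq_single (π.symm k)]
  · simp [Pi.single_apply, mul_comm]
  · intro i _ hi
    have : k ≠ π i := fun hc => hi (by rw [hc, Equiv.symm_apply_apply])
    simp [Pi.single_apply, this]
  · simp

/-- a linear automorphism sending each basis vector to a signed basis vector is an `spEquiv` -/
lemma exists_spEquiv_eq (φ : (ι → ℝ) ≃ₗ[ℝ] (ι → ℝ))
    (h : ∀ i, ∃ j b, φ (Pi.single i 1) = Pi.single j (sgn b)) :
    ∃ ε π, φ = spEquiv ε π := by
  choose J B hJB using h
  have hJ : Function.Injective J := fun i i' hii' => by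
    refine index_inj φ (sgn_ne_zero (B i)) (sgn_ne_zero (B i')) (hJB i) ?_
    rw [hii']; exact hJB i'
  have hJb : Function.Bijective J := (Finite.injective_iff_bijective).mp hJ
  let π : Equiv.Perm ι := Equiv.ofBijective J hJb
  refine ⟨fun j => B (π.symm j), π, ?_⟩
  apply LinearEquiv.toLinearMap_injective
  apply Module.Basis.ext (Pi.basisFun ℝ ι)
  intro i
  simp only [Pi.basisFun_apply, LinearEquiv.coe_coe]
  rw [spEquiv_single, hJB i]
  have h1 : π i = J i := rfl
  rw [h1]
  congr 1
  have : π.symm (J i) = i := by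
    apply hJ; change J _ = J i
    have := Equiv.apply_symm_apply π (J i)
    exact this
  rw [this]

/-! ### Zset lemmas -/

lemma zset_neg {d : ℕ} {x : ℝ} (h : x ∈ Zset d) : -x ∈ Zset d := by
  obtain ⟨k, rfl, hk1, hk2⟩ := h
  exact ⟨-k, by push_cast; ring, by simpa using hk1, by rw [Int.neg_emod_two]; exact hk2⟩

lemma zset_natCast (d : ℕ) : ((d : ℝ)) ∈ Zset d := ⟨(d : ℤ), by push_cast; ring, by simp, rfl⟩

lemma zset_neg_natCast (d : ℕ) : (-(d : ℝ)) ∈ Zset d := zset_neg (zset_natCast d)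

lemma zset_abs_le {d : ℕ} {x : ℝ} (h : x ∈ Zset d) : |x| ≤ (d : ℝ) := by
  obtain ⟨k, rfl, hk1, hk2⟩ := h
  rw [← Int.cast_abs]
  have : |k| ≤ (d : ℤ) := abs_le.mpr ⟨by omega, by omega⟩
  exact_mod_cast this

/-- interior step: a non-extreme element of `Zset d` can move by `±2` -/
lemma zset_step {d : ℕ} {x : ℝ} (h : x ∈ Zset d) (h1 : x ≠ (d : ℝ)) (h2 : x ≠ -(d : ℝ)) :
    (x + 2) ∈ Zset d ∧ (x - 2) ∈ Zset d := by
  obtain ⟨k, rfl, hk1, hk2⟩ := h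
  have hd1 : k ≠ (d : ℤ) := fun hc => h1 (by rw [hc]; norm_num)
  have hd2 : k ≠ -(d : ℤ) := fun hc => h2 (by rw [hc]; push_cast; ring)
  constructor
  · exact ⟨k + 2, by push_cast; ring, by omega, by omega⟩
  · exact ⟨k - 2, by push_cast; ring, by omega, by omega⟩

/-- `(d:ℝ) - 2 ∈ Zset d` when `0 < d` -/
lemma zset_sub_two {d : ℕ} (hd : 0 < d) : ((d : ℝ) - 2) ∈ Zset d :=
  ⟨(d : ℤ) - 2, by push_cast; ring, by omega, by omega⟩

/-! ### Corners of the grid and convex-hull vertex arguments -/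

variable {n : ℕ}

def Corner (a : Fin n → ℕ) : Set (Fin n → ℝ) := {v | ∀ i, v i = (a i : ℝ) ∨ v i = -(a i : ℝ)}

lemma corner_subset_zprod {a : Fin n → ℕ} : Corner a ⊆ Zprod a := by
  intro v hv i
  rcases hv i with h | h
  · rw [h]; exact zset_natCast _
  · rw [h]; exact zset_neg_natCast _

/-- key termwise bound: if `v i = ±a i` and `|x i| ≤ a i` then `v i * x i ≤ (a i)²`,
strictly if `x i ≠ v i` and `0 < a i`. -/
lemma corner_term_bound {v x : ℝ} {d : ℕ} (hv : v = (d : ℝ) ∨ v = -(d : ℝ))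
    (hx : |x| ≤ (d : ℝ)) : v * x ≤ (d : ℝ)^2 ∧ (0 < d → x ≠ v → v * x < (d : ℝ)^2) := by
  have hx1 : -(d : ℝ) ≤ x := (abs_le.mp hx).1
  have hx2 : x ≤ (d : ℝ) := (abs_le.mp hx).2
  rcases hv with rfl | rfl
  · constructor
    · nlinarith
    · intro hd hne
      have hd' : (0 : ℝ) < d := by exact_mod_cast hd
      have : x < (d : ℝ) := lt_of_le_of_ne hx2 hne
      nlinarith
  · constructor
    · nlinarith
    · intro hd hne
      have hd' : (0 : ℝ) < d := by exact_mod_cast hd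
      have : -(d:ℝ) < x := lt_of_le_of_ne hx1 (fun hc => hne hc.symm)
      nlinarith

/-- a corner is not in the convex hull of the other grid points -/
lemma corner_not_mem_hull {a : Fin n → ℕ} (hapos : ∀ i, 0 < a i) {v : Fin n → ℝ}
    (hv : v ∈ Corner a) : v ∉ convexHull ℝ (Zprod a \ {v}) := by
  intro hmem
  set f : (Fin n → ℝ) → ℝ := fun x => ∑ i, v i * x i with hf
  have hlin : IsLinearMap ℝ f := by
    constructor
    · intro x y; simp only [hf, Pi.add_apply, mul_add, Finset.sum_add_distrib]
    · intro c x; simp only [hf, Pi.smul_apply, smul_eq_mul]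
      rw [Finset.mul_sum]; refine Finset.sum_congr rfl fun i _ => by ring
  have hstrict : ∀ x ∈ Zprod a \ {v}, f x < f v := by
    rintro x ⟨hx, hxv⟩
    have hxv' : x ≠ v := hxv
    obtain ⟨i0, hi0⟩ : ∃ i, x i ≠ v i := by
      by_contra hc; push_neg at hc; exact hxv' (funext hc)
    have hfv : f v = ∑ i, ((a i : ℝ))^2 := by
      refine Finset.sum_congr rfl fun i _ => ?_
      rcases hv i with h | h <;> rw [h] <;> ring
    rw [hfv]
    refine Finset.sum_lt_sum (fun i _ => ?_) ⟨i0, Finset.mem_univ i0, ?_⟩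
    · exact (corner_term_bound (hv i) (zset_abs_le (hx i))).1
    · exact (corner_term_bound (hv i0) (zset_abs_le (hx i0))).2 (hapos i0) hi0
  have hsub : convexHull ℝ (Zprod a \ {v}) ⊆ {x | f x < f v} :=
    convexHull_min hstrict (convex_halfSpace_lt hlin _)
  exact lt_irrefl (f v) (hsub hmem)

/-- a non-corner grid point is in the convex hull of the other grid points -/
lemma not_corner_mem_hull {a : Fin n → ℕ} {x : Fin n → ℝ}
    (hx : x ∈ Zprod a) (hnc : x ∉ Corner a) : x ∈ convexHull ℝ (Zprod a \ {x}) := by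
  simp only [Corner, Set.mem_setOf_eq, not_forall] at hnc
  obtain ⟨i, hi⟩ := hnc
  push_neg at hi
  obtain ⟨h1, h2⟩ := hi
  obtain ⟨hp, hm⟩ := zset_step (hx i) h1 h2
  set p : Fin n → ℝ := Function.update x i (x i + 2) with hpdef
  set q : Fin n → ℝ := Function.update x i (x i - 2) with hqdef
  have hpZ : p ∈ Zprod a := by
    intro j; by_cases hj : j = i
    · subst hj; rw [hpdef, Function.update_self]; exact hp
    · rw [hpdef, Function.update_of_ne hj]; exact hx j
  have hqZ : q ∈ Zprod a := by
    intro j; by_cases hj : j = i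
    · subst hj; rw [hqdef, Function.update_self]; exact hm
    · rw [hqdef, Function.update_of_ne hj]; exact hx j
  have hpne : p ≠ x := by
    intro hc; have := congrFun hc i
    rw [hpdef, Function.update_self] at this; linarith
  have hqne : q ≠ x := by
    intro hc; have := congrFun hc i
    rw [hqdef, Function.update_self] at this; linarith
  have hmid : x = (1/2 : ℝ) • p + (1/2 : ℝ) • q := by
    funext j
    by_cases hj : j = i
    · subst hj
      simp only [Pi.add_apply, Pi.smul_apply, smul_eq_mul, hpdef, hqdef,
        Function.update_self]
      ring
    · simp only [Pi.add_apply, Pi.smul_apply, smul_eq_mul, hpdef, hqdef,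
        Function.update_of_ne hj]
      ring
  have hpS : p ∈ Zprod a \ {x} := ⟨hpZ, by simpa using hpne⟩
  have hqS : q ∈ Zprod a \ {x} := ⟨hqZ, by simpa using hqne⟩
  have hres : (1/2 : ℝ) • p + (1/2 : ℝ) • q ∈ convexHull ℝ (Zprod a \ {x}) := by
    refine (convex_convexHull ℝ (Zprod a \ {x})) (subset_convexHull ℝ _ hpS)
      (subset_convexHull ℝ _ hqS) ?_ ?_ ?_ <;> norm_num
  rwa [← hmid] at hres

/-! ### adjacency of corners -/

def DiffOne {n : ℕ} (u v : Fin n → ℝ) : Prop := ∃ i, u i ≠ v i ∧ ∀ j, j ≠ i → u j = v j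

/-- corners differing in exactly one coordinate: the midpoint is not in the hull of the
other corners -/
lemma mid_not_mem_hull_of_diffOne {a : Fin n → ℕ} (hapos : ∀ i, 0 < a i)
    {u v : Fin n → ℝ} (hu : u ∈ Corner a) (hv : v ∈ Corner a) (hd : DiffOne u v) :
    (1/2 : ℝ) • (u + v) ∉ convexHull ℝ (Corner a \ {u, v}) := by
  obtain ⟨i, hi, hagree⟩ := hd
  intro hmem
  set c : Fin n → ℝ := fun j => if j = i then 0 else u j with hc
  set f : (Fin n → ℝ) → ℝ := fun x => ∑ j, c j * x j with hf
  have hlin : IsLinearMap ℝ f := by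
    constructor
    · intro x y; simp only [hf, Pi.add_apply, mul_add, Finset.sum_add_distrib]
    · intro r x; simp only [hf, Pi.smul_apply, smul_eq_mul]
      rw [Finset.mul_sum]; exact Finset.sum_congr rfl fun j _ => by ring
  set m : Fin n → ℝ := (1/2 : ℝ) • (u + v) with hm
  have hmj : ∀ j, j ≠ i → m j = u j := by
    intro j hj
    simp only [hm, Pi.smul_apply, Pi.add_apply, smul_eq_mul, hagree j hj]
    ring
  have hGm : ∀ j, c j * m j = if j = i then 0 else ((a j : ℝ))^2 := by
    intro j
    by_cases hj : j = i
    · simp [hc, hj]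
    · rw [if_neg hj]
      simp only [hc, if_neg hj, hmj j hj]
      rcases hu j with h | h <;> rw [h] <;> ring
  have hstrict : ∀ w ∈ Corner a \ {u, v}, f w < f m := by
    rintro w ⟨hw, hwuv⟩
    have hwu : w ≠ u := fun hc => hwuv (Or.inl hc)
    have hwv : w ≠ v := fun hc => hwuv (Or.inr hc)
    obtain ⟨j0, hj0i, hj0⟩ : ∃ j, j ≠ i ∧ w j ≠ u j := by
      by_contra hcon
      push_neg at hcon
      have hwi : w i = u i ∨ w i = v i := by
        rcases hw i with h | h <;> rcases hu i with h' | h' <;> rcases hv i with h'' | h''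
        · exact Or.inl (h.trans h'.symm)
        · exact Or.inl (h.trans h'.symm)
        · exact Or.inr (h.trans h''.symm)
        · exact (hi (h'.trans h''.symm)).elim
        · exact (hi (h'.trans h''.symm)).elim
        · exact Or.inr (h.trans h''.symm)
        · exact Or.inl (h.trans h'.symm)
        · exact Or.inl (h.trans h'.symm)
      rcases hwi with h | h
      · exact hwu (funext fun j => by
          by_cases hj : j = i
          · rw [hj]; exact h
          · exact hcon j hj)
      · exact hwv (funext fun j => by
          by_cases hj : j = i
          · rw [hj]; exact h
          · rw [hcon j hj]; exact hagree j hj)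
    have hle : ∀ j ∈ Finset.univ, c j * w j ≤ c j * m j := by
      intro j _
      rw [hGm j]
      by_cases hj : j = i
      · simp [hc, hj]
      · rw [if_neg hj]
        simp only [hc, if_neg hj]
        exact (corner_term_bound (hu j) (zset_abs_le (corner_subset_zprod hw j))).1
    refine Finset.sum_lt_sum hle ⟨j0, Finset.mem_univ j0, ?_⟩
    rw [hGm j0, if_neg hj0i]
    simp only [hc, if_neg hj0i]
    exact (corner_term_bound (hu j0)
      (zset_abs_le (corner_subset_zprod hw j0))).2 (hapos j0) hj0
  have hsub : convexHull ℝ (Corner a \ {u, v}) ⊆ {x | f x < f m} :=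
    convexHull_min hstrict (convex_halfSpace_lt hlin _)
  exact lt_irrefl (f m) (hsub hmem)

/-- corners differing in at least two coordinates: the midpoint is in the hull of the
other corners -/
lemma mid_mem_hull_of_not_diffOne {a : Fin n → ℕ}
    {u v : Fin n → ℝ} (hu : u ∈ Corner a) (hv : v ∈ Corner a) (huv : u ≠ v)
    (hnd : ¬ DiffOne u v) :
    (1/2 : ℝ) • (u + v) ∈ convexHull ℝ (Corner a \ {u, v}) := by
  obtain ⟨i, hi⟩ : ∃ i, u i ≠ v i := by
    by_contra hc; push_neg at hc; exact huv (funext hc)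
  obtain ⟨i', hi'ne, hi'⟩ : ∃ i', i' ≠ i ∧ u i' ≠ v i' := by
    by_contra hc
    push_neg at hc
    exact hnd ⟨i, hi, fun j hj => hc j hj⟩
  set u' : Fin n → ℝ := Function.update u i (v i) with hu'def
  set v' : Fin n → ℝ := Function.update v i (u i) with hv'def
  have hu'C : u' ∈ Corner a := by
    intro j; by_cases hj : j = i
    · subst hj; rw [hu'def, Function.update_self]; exact hv j
    · rw [hu'def, Function.update_of_ne hj]; exact hu j
  have hv'C : v' ∈ Corner a := by
    intro j; by_cases hj : j = i
    · subst hj; rw [hv'def, Function.update_self]; exact hu j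
    · rw [hv'def, Function.update_of_ne hj]; exact hv j
  have hu'u : u' ≠ u := fun hc => hi (by
    have := congrFun hc i; rw [hu'def, Function.update_self] at this; exact this.symm)
  have hu'v : u' ≠ v := fun hc => hi' (by
    have := congrFun hc i'; rwa [hu'def, Function.update_of_ne hi'ne] at this)
  have hv'v : v' ≠ v := fun hc => hi (by
    have := congrFun hc i; rw [hv'def, Function.update_self] at this; exact this)
  have hv'u : v' ≠ u := fun hc => hi' (by
    have := congrFun hc i'; rw [hv'def, Function.update_of_ne hi'ne] at this
    exact this.symm)
  have hu'S : u' ∈ Corner a \ {u, v} := ⟨hu'C, by simp [hu'u, hu'v]⟩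
  have hv'S : v' ∈ Corner a \ {u, v} := ⟨hv'C, by simp [hv'u, hv'v]⟩
  have hmid : (1/2 : ℝ) • (u + v) = (1/2 : ℝ) • u' + (1/2 : ℝ) • v' := by
    funext j
    by_cases hj : j = i
    · subst hj
      simp only [Pi.smul_apply, Pi.add_apply, smul_eq_mul, hu'def, hv'def,
        Function.update_self]
      ring
    · simp only [Pi.smul_apply, Pi.add_apply, smul_eq_mul, hu'def, hv'def,
        Function.update_of_ne hj]
      ring
  rw [hmid]
  refine (convex_convexHull ℝ (Corner a \ {u, v})) (subset_convexHull ℝ _ hu'S)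
    (subset_convexHull ℝ _ hv'S) ?_ ?_ ?_ <;> norm_num

/-! ### transport under an automorphism preserving the grid -/

lemma symm_image {φ : (Fin n → ℝ) ≃ₗ[ℝ] (Fin n → ℝ)} {S : Set (Fin n → ℝ)}
    (h : ⇑φ '' S = S) : ⇑φ.symm '' S = S := by
  conv_lhs => rw [← h]
  rw [← Set.image_comp]
  have : ⇑φ.symm ∘ ⇑φ = id := by funext x; simp
  rw [this, Set.image_id]

lemma image_hull_diff {φ : (Fin n → ℝ) ≃ₗ[ℝ] (Fin n → ℝ)} {S T : Set (Fin n → ℝ)}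
    (h : ⇑φ '' S = S) :
    ⇑φ '' convexHull ℝ (S \ T) = convexHull ℝ (S \ ⇑φ '' T) := by
  rw [show ⇑φ = ⇑φ.toLinearMap from rfl, LinearMap.image_convexHull]
  congr 1
  rw [show ⇑φ.toLinearMap = ⇑φ from rfl, Set.image_diff φ.injective, h]

lemma corner_maps {a : Fin n → ℕ} (hapos : ∀ i, 0 < a i)
    {φ : (Fin n → ℝ) ≃ₗ[ℝ] (Fin n → ℝ)} (hφ : ⇑φ '' Zprod a = Zprod a)
    {v : Fin n → ℝ} (hv : v ∈ Corner a) : φ v ∈ Corner a := by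
  have hvZ : φ v ∈ Zprod a := by
    rw [← hφ]; exact Set.mem_image_of_mem _ (corner_subset_zprod hv)
  by_contra hnc
  have h1 : φ v ∈ convexHull ℝ (Zprod a \ {φ v}) := not_corner_mem_hull hvZ hnc
  have h2 : convexHull ℝ (Zprod a \ {φ v}) = ⇑φ '' convexHull ℝ (Zprod a \ {v}) := by
    rw [image_hull_diff hφ, Set.image_singleton]
  rw [h2] at h1
  obtain ⟨x, hx, hxv⟩ := h1
  have : x = v := φ.injective hxv
  rw [this] at hx
  exact corner_not_mem_hull hapos hv hx

lemma corner_image {a : Fin n → ℕ} (hapos : ∀ i, 0 < a i)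
    {φ : (Fin n → ℝ) ≃ₗ[ℝ] (Fin n → ℝ)} (hφ : ⇑φ '' Zprod a = Zprod a) :
    ⇑φ '' Corner a = Corner a := by
  apply Set.eq_of_subset_of_subset
  · rintro _ ⟨v, hv, rfl⟩; exact corner_maps hapos hφ hv
  · intro v hv
    refine ⟨φ.symm v, corner_maps hapos (symm_image hφ) hv, by simp⟩

/-- main geometric step: basis vectors go to scaled basis vectors, with scale `± a j / a i` -/
lemma omega_spdata {a : Fin n → ℕ} (hapos : ∀ i, 0 < a i)
    {φ : (Fin n → ℝ) ≃ₗ[ℝ] (Fin n → ℝ)} (hφ : ⇑φ '' Zprod a = Zprod a) (i : Fin n) :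
    ∃ j c, (c = ((a j : ℝ) / (a i : ℝ)) ∨ c = -((a j : ℝ) / (a i : ℝ))) ∧
      φ (Pi.single i 1) = Pi.single j c := by
  classical
  set u : Fin n → ℝ := fun j => (a j : ℝ) with hu
  set v : Fin n → ℝ := Function.update u i (-(a i : ℝ)) with hv
  have hai : (0 : ℝ) < (a i : ℝ) := by exact_mod_cast hapos i
  have huC : u ∈ Corner a := fun j => Or.inl rfl
  have hvC : v ∈ Corner a := by
    intro j; by_cases hj : j = i
    · subst hj; rw [hv, Function.update_self]; exact Or.inr rfl
    · rw [hv, Function.update_of_ne hj]; exact Or.inl rfl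
  have hd : DiffOne u v := by
    refine ⟨i, ?_, fun j hj => by rw [hv, Function.update_of_ne hj]⟩
    rw [hv, Function.update_self, hu]
    intro hc; simp only [hu] at hc; linarith
  have huv : u ≠ v := by
    intro hc; obtain ⟨i0, h0, _⟩ := hd; exact h0 (congrFun hc i0)
  -- transport adjacency
  have hnm : (1/2 : ℝ) • (u + v) ∉ convexHull ℝ (Corner a \ {u, v}) :=
    mid_not_mem_hull_of_diffOne hapos huC hvC hd
  have hφu : φ u ∈ Corner a := corner_maps hapos hφ huC
  have hφv : φ v ∈ Corner a := corner_maps hapos hφ hvC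
  have hφuv : φ u ≠ φ v := fun hc => huv (φ.injective hc)
  have hnm' : (1/2 : ℝ) • (φ u + φ v) ∉ convexHull ℝ (Corner a \ {φ u, φ v}) := by
    intro hmem
    apply hnm
    have him : ⇑φ '' ({u, v} : Set (Fin n → ℝ)) = {φ u, φ v} := by
      simp [Set.image_insert_eq]
    have h2 : convexHull ℝ (Corner a \ {φ u, φ v})
        = ⇑φ '' convexHull ℝ (Corner a \ {u, v}) := by
      rw [image_hull_diff (corner_image hapos hφ), him]
    rw [h2] at hmem
    obtain ⟨x, hx, hxe⟩ := hmem
    have hmid : φ ((1/2 : ℝ) • (u + v)) = (1/2 : ℝ) • (φ u + φ v) := by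
      rw [map_smul, map_add]
    have : x = (1/2 : ℝ) • (u + v) := φ.injective (by rw [hxe, hmid])
    rwa [this] at hx
  have hd' : DiffOne (φ u) (φ v) := by
    by_contra hnd
    exact hnm' (mid_mem_hull_of_not_diffOne hφu hφv hφuv hnd)
  obtain ⟨j, hj, hagree⟩ := hd'
  refine ⟨j, (φ u j - φ v j) / (2 * (a i : ℝ)), ?_, ?_⟩
  · -- the value of the scale
    rcases hφu j with h1 | h1 <;> rcases hφv j with h2 | h2
    · exact (hj (h1.trans h2.symm)).elim
    · left; rw [h1, h2]; field_simp; ring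
    · right; rw [h1, h2]; field_simp; ring
    · exact (hj (h1.trans h2.symm)).elim
  · -- φ on the basis vector
    have hsub : u - v = Pi.single i (2 * (a i : ℝ)) := by
      funext k
      by_cases hk : k = i
      · subst hk
        simp only [Pi.sub_apply, hv, Function.update_self, hu, Pi.single_apply]
        norm_num
        ring
      · simp only [Pi.sub_apply, hv, Function.update_of_ne hk, Pi.single_apply, if_neg hk,
          sub_self]
    have himg : φ (u - v) = φ u - φ v := map_sub _ _ _
    have hright : φ u - φ v = Pi.single j (φ u j - φ v j) := by
      funext k
      by_cases hk : k = j
      · subst hk; simp [Pi.single_apply]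
      · simp only [Pi.sub_apply, Pi.single_apply, if_neg hk, hagree k hk, sub_self]
    have hsingle : (Pi.single i (2 * (a i : ℝ)) : Fin n → ℝ)
        = (2 * (a i : ℝ)) • (Pi.single i 1 : Fin n → ℝ) := by
      funext k; by_cases hk : k = i <;> simp [Pi.single_apply, hk]
    have : (2 * (a i : ℝ)) • φ (Pi.single i 1) = Pi.single j (φ u j - φ v j) := by
      rw [← map_smul, ← hsingle, ← hsub, himg, hright]
    have h2ne : (2 * (a i : ℝ)) ≠ 0 := by positivity
    funext k
    have := congrFun this k
    simp only [Pi.smul_apply, smul_eq_mul] at this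
    by_cases hk : k = j
    · subst hk
      rw [Pi.single_apply, if_pos rfl]
      rw [eq_div_iff h2ne]
      rw [Pi.single_eq_same] at this
      linarith [this]
    · rw [Pi.single_apply, if_neg hk]
      have h0 : 2 * (a i : ℝ) * φ (Pi.single i 1) k = 0 := by
        rw [this, Pi.single_apply, if_neg hk]
      exact (mul_eq_zero.mp h0).resolve_left h2ne

/-! ### divisibility and the structure theorem -/

lemma dvd_of_scaled {ai aj : ℕ} (hai : 0 < ai)
    (h : ((aj : ℝ) / (ai : ℝ)) * ((ai : ℝ) - 2) ∈ Zset aj) : ai ∣ aj := by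
  obtain ⟨k, hk, _, hpar⟩ := h
  have haiR : (ai : ℝ) ≠ 0 := by positivity
  have heq : (aj : ℝ) * ((ai : ℝ) - 2) = (k : ℝ) * (ai : ℝ) := by
    field_simp at hk
    linarith [hk]
  have heqZ : (aj : ℤ) * ((ai : ℤ) - 2) = k * (ai : ℤ) := by exact_mod_cast heq
  have hpar2 : (2 : ℤ) ∣ ((aj : ℤ) - k) := by omega
  obtain ⟨l, hl⟩ := hpar2
  have : (aj : ℤ) = (ai : ℤ) * l := by nlinarith [heqZ, hl]
  have : (ai : ℤ) ∣ (aj : ℤ) := Dvd.intro _ this.symm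
  exact_mod_cast this


lemma dvd_aux {a : Fin n → ℕ} (hapos : ∀ i, 0 < a i)
    {φ : (Fin n → ℝ) ≃ₗ[ℝ] (Fin n → ℝ)} (hφ : ⇑φ '' Zprod a = Zprod a)
    {J : Fin n → Fin n} {c : Fin n → ℝ}
    (hJc : ∀ i, φ (Pi.single i 1) = Pi.single (J i) (c i))
    (hsign : ∀ i, c i = ((a (J i) : ℝ) / (a i : ℝ)) ∨ c i = -((a (J i) : ℝ) / (a i : ℝ)))
    (hJinj : Function.Injective J) (i : Fin n) : a i ∣ a (J i) := by
  classical
  set y : Fin n → ℝ := Function.update (fun j => (a j : ℝ)) i ((a i : ℝ) - 2) with hy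
  have hyZ : y ∈ Zprod a := by
    intro j; by_cases hj : j = i
    · subst hj; rw [hy, Function.update_self]; exact zset_sub_two (hapos j)
    · rw [hy, Function.update_of_ne hj]; exact zset_natCast _
  have hφy : φ y ∈ Zprod a := by
    rw [← hφ]; exact Set.mem_image_of_mem _ hyZ
  have hπ : Function.Bijective J := Finite.injective_iff_bijective.mp hJinj
  set π : Equiv.Perm (Fin n) := Equiv.ofBijective J hπ with hπdef
  have hform := apply_of_basis φ c π (fun i => hJc i) y (J i)
  have hsymm : π.symm (J i) = i := by
    apply hJinj; change J _ = J i
    exact Equiv.apply_symm_apply π (J i)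
  rw [hsymm] at hform
  have hyi : y i = (a i : ℝ) - 2 := by rw [hy, Function.update_self]
  rw [hyi] at hform
  have hmem : c i * ((a i : ℝ) - 2) ∈ Zset (a (J i)) := by
    rw [← hform]; exact hφy (J i)
  rcases hsign i with h | h
  · rw [h] at hmem; exact dvd_of_scaled (hapos i) hmem
  · rw [h] at hmem
    have := zset_neg hmem
    rw [show -(-((a (J i) : ℝ) / (a i : ℝ)) * ((a i : ℝ) - 2))
        = ((a (J i) : ℝ) / (a i : ℝ)) * ((a i : ℝ) - 2) by ring] at this
    exact dvd_of_scaled (hapos i) this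

/-- full structure theorem: an automorphism preserving the grid is a signed permutation
whose permutation preserves the bound function `a` -/
lemma omega_struct {a : Fin n → ℕ} (hapos : ∀ i, 0 < a i)
    {φ : (Fin n → ℝ) ≃ₗ[ℝ] (Fin n → ℝ)} (hφ : ⇑φ '' Zprod a = Zprod a) :
    ∃ (ε : Fin n → Bool) (π : Equiv.Perm (Fin n)),
      (∀ i, a (π i) = a i) ∧ φ = spEquiv ε π := by
  classical
  choose J c hsign hJc using fun i => omega_spdata hapos hφ i
  choose J' c' hsign' hJc' using fun i => omega_spdata hapos (symm_image hφ) i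
  have hcpos : ∀ i, c i ≠ 0 := by
    intro i
    have h1 : ((a (J i) : ℝ) / (a i : ℝ)) ≠ 0 := by
      have := hapos i; have := hapos (J i); positivity
    rcases hsign i with h | h <;> rw [h] <;> simpa using h1
  have hc'pos : ∀ i, c' i ≠ 0 := by
    intro i
    have h1 : ((a (J' i) : ℝ) / (a i : ℝ)) ≠ 0 := by
      have := hapos i; have := hapos (J' i); positivity
    rcases hsign' i with h | h <;> rw [h] <;> simpa using h1
  have hJinj : Function.Injective J := fun i i' h => by
    refine index_inj φ (hcpos i) (hcpos i') (hJc i) ?_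
    rw [h]; exact hJc i'
  -- J' inverts J
  have hJ'J : ∀ i, J' (J i) = i := by
    intro i
    have h2 := hJc' (J i)
    have h3 : (Pi.single (J i) 1 : Fin n → ℝ)
        = φ (Pi.single (J' (J i)) (c' (J i))) := by
      rw [← h2, φ.apply_symm_apply]
    have h4 : (Pi.single (J' (J i)) (c' (J i)) : Fin n → ℝ)
        = c' (J i) • (Pi.single (J' (J i)) 1 : Fin n → ℝ) := by
      funext k; by_cases hk : k = J' (J i) <;> simp [Pi.single_apply, hk]
    rw [h4, map_smul, hJc (J' (J i))] at h3
    by_cases hJJ : J (J' (J i)) = J i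
    · exact hJinj hJJ
    · exfalso
      have h5 := congrFun h3 (J i)
      rw [Pi.single_apply, if_pos rfl] at h5
      have hz : (Pi.single (J (J' (J i))) (c (J' (J i))) : Fin n → ℝ) (J i) = 0 := by
        rw [Pi.single_apply, if_neg (fun hc => hJJ hc.symm)]
      rw [Pi.smul_apply, hz, smul_zero] at h5
      exact one_ne_zero h5
  -- divisibility both ways
  have hJ'inj : Function.Injective J' := fun i i' h => by
    refine index_inj φ.symm (hc'pos i) (hc'pos i') (hJc' i) ?_
    rw [h]; exact hJc' i'
  have hdvd : ∀ i, a i ∣ a (J i) := dvd_aux hapos hφ hJc hsign hJinj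
  have hdvd' : ∀ i, a i ∣ a (J' i) :=
    dvd_aux hapos (symm_image hφ) hJc' hsign' hJ'inj
  have haJ : ∀ i, a (J i) = a i := by
    intro i
    have h1 := hdvd i
    have h2 := hdvd' (J i)
    rw [hJ'J i] at h2
    exact Nat.dvd_antisymm h2 h1
  -- now c i = ±1
  have hc1 : ∀ i, c i = 1 ∨ c i = -1 := by
    intro i
    have hne : (a i : ℝ) ≠ 0 := by
      have := hapos i; exact_mod_cast this.ne'
    rcases hsign i with h | h
    · left; rw [h, haJ i]; field_simp
    · right; rw [h, haJ i]; field_simp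
  have hπb : Function.Bijective J := Finite.injective_iff_bijective.mp hJinj
  set π : Equiv.Perm (Fin n) := Equiv.ofBijective J hπb with hπdef
  refine ⟨fun j => decide (c (π.symm j) = 1), π, fun i => haJ i, ?_⟩
  apply LinearEquiv.toLinearMap_injective
  apply Module.Basis.ext (Pi.basisFun ℝ (Fin n))
  intro i
  simp only [Pi.basisFun_apply, LinearEquiv.coe_coe]
  rw [spEquiv_single, hJc i]
  have hπi : π i = J i := rfl
  have hsymm : π.symm (π i) = i := Equiv.symm_apply_apply π i
  rw [hπi] at hsymm ⊢
  rw [hsymm]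
  rcases hc1 i with h | h
  · rw [h]; simp [sgn]
  · rw [h]; norm_num [sgn]

/-! ### converse: signed fiber-permutations preserve the grid -/

lemma spEquiv_image {a : Fin n → ℕ} {ε : Fin n → Bool} {π : Equiv.Perm (Fin n)}
    (hπ : ∀ i, a (π i) = a i) : ⇑(spEquiv ε π) '' Zprod a = Zprod a := by
  have hπ' : ∀ j, a (π.symm j) = a j := by
    intro j
    conv_rhs => rw [← Equiv.apply_symm_apply π j]
    rw [hπ]
  have key : ∀ b (x : ℝ) d, x ∈ Zset d → sgn b * x ∈ Zset d := by
    intro b x d hx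
    cases b
    · rw [show sgn false * x = -x by norm_num [sgn]]; exact zset_neg hx
    · rw [show sgn true * x = x by simp [sgn]]; exact hx
  apply Set.eq_of_subset_of_subset
  · rintro _ ⟨x, hx, rfl⟩
    intro j
    rw [spEquiv_apply]
    have := hx (π.symm j)
    rw [hπ'] at this
    exact key _ _ _ this
  · intro y hy
    refine ⟨(spEquiv ε π).symm y, ?_, by simp⟩
    intro i
    rw [spEquiv_symm_apply]
    have := hy (π i)
    rw [hπ i] at this
    exact key _ _ _ this

lemma spEquiv_orth {ε : ι → Bool} {π : Equiv.Perm ι} (x y : ι → ℝ) :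
    ∑ i, spEquiv ε π x i * spEquiv ε π y i = ∑ i, x i * y i := by
  have : ∀ j, spEquiv ε π x j * spEquiv ε π y j = x (π.symm j) * y (π.symm j) := by
    intro j
    rw [spEquiv_apply, spEquiv_apply,
      show sgn (ε j) * x (π.symm j) * (sgn (ε j) * y (π.symm j))
        = (sgn (ε j) * sgn (ε j)) * (x (π.symm j) * y (π.symm j)) by ring,
      sgn_mul_self, one_mul]
  rw [Finset.sum_congr rfl (fun j _ => this j)]
  exact Equiv.sum_comp π.symm (fun i => x i * y i)

/-! ### the subgroups -/

def OmegaGroup (a : Fin n → ℕ) : Subgroup ((Fin n → ℝ) ≃ₗ[ℝ] (Fin n → ℝ)) where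
  carrier := {φ | ⇑φ '' Zprod a = Zprod a}
  one_mem' := by
    show ⇑(1 : (Fin n → ℝ) ≃ₗ[ℝ] (Fin n → ℝ)) '' Zprod a = Zprod a
    have : ⇑(1 : (Fin n → ℝ) ≃ₗ[ℝ] (Fin n → ℝ)) = id := rfl
    rw [this, Set.image_id]
  mul_mem' := by
    intro φ ψ hφ hψ
    show ⇑(φ * ψ) '' Zprod a = Zprod a
    have : ⇑(φ * ψ) = ⇑φ ∘ ⇑ψ := rfl
    rw [this, Set.image_comp]
    show ⇑φ '' (⇑ψ '' Zprod a) = Zprod a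
    rw [hψ]; exact hφ
  inv_mem' := by
    intro φ hφ
    show ⇑φ⁻¹ '' Zprod a = Zprod a
    have : ⇑φ⁻¹ = ⇑φ.symm := rfl
    rw [this]
    exact symm_image hφ

lemma mem_omegaGroup {a : Fin n → ℕ} (φ : (Fin n → ℝ) ≃ₗ[ℝ] (Fin n → ℝ)) :
    φ ∈ OmegaGroup a ↔ ⇑φ '' Zprod a = Zprod a := Iff.rfl

lemma isSignedPermMap_iff {m : ℕ} (φ : (Fin m → ℝ) ≃ₗ[ℝ] (Fin m → ℝ)) :
    IsSignedPermMap m φ ↔ ∃ ε π, φ = spEquiv ε π := by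
  constructor
  · intro h
    apply exists_spEquiv_eq
    intro i
    obtain ⟨j, hj⟩ := h i
    obtain ⟨b, hb⟩ := or_single_sgn hj
    exact ⟨j, b, hb⟩
  · rintro ⟨ε, π, rfl⟩
    intro i
    exact ⟨π i, by rw [spEquiv_single]; exact single_sgn_or _ _⟩

def SPGroup (m : ℕ) : Subgroup ((Fin m → ℝ) ≃ₗ[ℝ] (Fin m → ℝ)) where
  carrier := {φ | IsSignedPermMap m φ}
  one_mem' := fun i => ⟨i, Or.inl rfl⟩
  mul_mem' := by
    intro φ ψ hφ hψ
    intro i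
    obtain ⟨j, hj⟩ := hψ i
    obtain ⟨b, hb⟩ := or_single_sgn hj
    obtain ⟨k, hk⟩ := hφ j
    obtain ⟨b', hb'⟩ := or_single_sgn hk
    have hsingle : (Pi.single j (sgn b) : Fin m → ℝ)
        = sgn b • (Pi.single j 1 : Fin m → ℝ) := by
      funext l; by_cases hl : l = j <;> simp [Pi.single_apply, hl]
    have : (φ * ψ) (Pi.single i 1) = Pi.single k (sgn b * sgn b') := by
      show φ (ψ (Pi.single i 1)) = _
      rw [hb, hsingle, map_smul, hb']
      funext l; by_cases hl : l = k <;> simp [Pi.single_apply, hl, mul_comm]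
    refine ⟨k, ?_⟩
    have hor : sgn b * sgn b' = sgn (b == b') := by
      cases b <;> cases b' <;> norm_num [sgn]
    rw [this, hor]
    exact single_sgn_or _ _
  inv_mem' := by
    intro φ hφ
    rw [Set.mem_setOf_eq, isSignedPermMap_iff] at hφ
    obtain ⟨ε, π, rfl⟩ := hφ
    intro i
    refine ⟨π.symm i, ?_⟩
    have : (spEquiv ε π)⁻¹ (Pi.single i 1) = (spEquiv ε π).symm (Pi.single i 1) := rfl
    rw [this]
    have hval : (spEquiv ε π).symm (Pi.single i 1)
        = Pi.single (π.symm i) (sgn (ε i)) := by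
      funext l
      rw [spEquiv_symm_apply, Pi.single_apply, Pi.single_apply]
      by_cases hl : l = π.symm i
      · rw [if_pos hl, if_pos (by rw [hl, Equiv.apply_symm_apply]), mul_one, hl,
          Equiv.apply_symm_apply]
      · rw [if_neg hl, if_neg (fun hc => hl (by rw [← hc, Equiv.symm_apply_apply])), mul_zero]
    rw [hval]
    exact single_sgn_or _ _

lemma mem_spGroup {m : ℕ} (φ : (Fin m → ℝ) ≃ₗ[ℝ] (Fin m → ℝ)) :
    φ ∈ SPGroup m ↔ IsSignedPermMap m φ := Iff.rfl

/-! ### blocks -/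

lemma perm_symm_fiber {a : Fin n → ℕ} {π : Equiv.Perm (Fin n)}
    (hπ : ∀ i, a (π i) = a i) (j : Fin n) : a (π.symm j) = a j := by
  conv_rhs => rw [← Equiv.apply_symm_apply π j]
  rw [hπ]

section blocks
variable (a : Fin n → ℕ)

def Bv (v : ℕ) : Finset (Fin n) := Finset.univ.filter fun i => a i = v

lemma mem_Bv {v : ℕ} {i : Fin n} : i ∈ Bv a v ↔ a i = v := by simp [Bv]

noncomputable def eBv (v : ℕ) : ↥(Bv a v) ≃ Fin (Bv a v).card := (Bv a v).equivFin

def extL (v : ℕ) : (Fin (Bv a v).card → ℝ) →ₗ[ℝ] (Fin n → ℝ) where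
  toFun x := fun i => if h : a i = v then x (eBv a v ⟨i, (mem_Bv a).mpr h⟩) else 0
  map_add' x y := by funext i; by_cases h : a i = v <;> simp [h]
  map_smul' c x := by funext i; by_cases h : a i = v <;> simp [h]

def resL (v : ℕ) : (Fin n → ℝ) →ₗ[ℝ] (Fin (Bv a v).card → ℝ) where
  toFun y := fun k => y ((eBv a v).symm k).1
  map_add' x y := rfl
  map_smul' c x := rfl

lemma extL_apply (v : ℕ) (x : Fin (Bv a v).card → ℝ) (i : Fin n) :
    extL a v x i = if h : a i = v then x (eBv a v ⟨i, (mem_Bv a).mpr h⟩) else 0 := rfl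

lemma resL_apply (v : ℕ) (y : Fin n → ℝ) (k : Fin (Bv a v).card) :
    resL a v y k = y ((eBv a v).symm k).1 := rfl

lemma res_ext (v : ℕ) (x : Fin (Bv a v).card → ℝ) : resL a v (extL a v x) = x := by
  funext k
  rw [resL_apply, extL_apply]
  have hmem : ((eBv a v).symm k).1 ∈ Bv a v := ((eBv a v).symm k).2
  have h : a ((eBv a v).symm k).1 = v := (mem_Bv a).mp hmem
  rw [dif_pos h]
  congr 1
  have : (⟨((eBv a v).symm k).1, (mem_Bv a).mpr h⟩ : ↥(Bv a v)) = (eBv a v).symm k :=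
    Subtype.ext rfl
  rw [this, Equiv.apply_symm_apply]

lemma ext_res_of_supp (v : ℕ) (y : Fin n → ℝ) (hy : ∀ i, a i ≠ v → y i = 0) :
    extL a v (resL a v y) = y := by
  funext i
  rw [extL_apply]
  by_cases h : a i = v
  · rw [dif_pos h, resL_apply]
    congr 1
    rw [Equiv.symm_apply_apply]
  · rw [dif_neg h]
    exact (hy i h).symm

lemma omega_supp {a : Fin n → ℕ} (hapos : ∀ i, 0 < a i)
    {φ : (Fin n → ℝ) ≃ₗ[ℝ] (Fin n → ℝ)} (hφ : φ ∈ OmegaGroup a) {v : ℕ}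
    (y : Fin n → ℝ) (hy : ∀ i, a i ≠ v → y i = 0) : ∀ i, a i ≠ v → φ y i = 0 := by
  obtain ⟨ε, π, hπ, rfl⟩ := omega_struct hapos hφ
  intro i hi
  rw [spEquiv_apply, hy _ (by rw [perm_symm_fiber hπ]; exact hi), mul_zero]

lemma extL_supp (v : ℕ) (x : Fin (Bv a v).card → ℝ) :
    ∀ i, a i ≠ v → extL a v x i = 0 := by
  intro i hi; rw [extL_apply, dif_neg hi]

lemma ext_res_phi {a : Fin n → ℕ} (hapos : ∀ i, 0 < a i)
    {φ : (Fin n → ℝ) ≃ₗ[ℝ] (Fin n → ℝ)} (hφ : φ ∈ OmegaGroup a) (v : ℕ)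
    (x : Fin (Bv a v).card → ℝ) :
    extL a v (resL a v (φ (extL a v x))) = φ (extL a v x) :=
  ext_res_of_supp a v _ (omega_supp hapos hφ _ (extL_supp a v x))

/-- the restriction of `φ ∈ Ω` to the block of value `v` -/
noncomputable def blockEquiv {a : Fin n → ℕ} (hapos : ∀ i, 0 < a i) (v : ℕ)
    (φ : (Fin n → ℝ) ≃ₗ[ℝ] (Fin n → ℝ)) (hφ : φ ∈ OmegaGroup a) :
    (Fin (Bv a v).card → ℝ) ≃ₗ[ℝ] (Fin (Bv a v).card → ℝ) :=
  LinearEquiv.ofLinear (resL a v ∘ₗ φ.toLinearMap ∘ₗ extL a v)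
    (resL a v ∘ₗ φ.symm.toLinearMap ∘ₗ extL a v)
    (by
      apply LinearMap.ext
      intro x
      have hinv : φ⁻¹ ∈ OmegaGroup a := inv_mem hφ
      have h1 : extL a v (resL a v (φ.symm (extL a v x))) = φ.symm (extL a v x) :=
        ext_res_phi hapos hinv v x
      simp only [LinearMap.comp_apply, LinearEquiv.coe_coe, LinearMap.id_apply]
      rw [h1, φ.apply_symm_apply, res_ext])
    (by
      apply LinearMap.ext
      intro x
      have h1 : extL a v (resL a v (φ (extL a v x))) = φ (extL a v x) :=
        ext_res_phi hapos hφ v x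
      simp only [LinearMap.comp_apply, LinearEquiv.coe_coe, LinearMap.id_apply]
      rw [h1, φ.symm_apply_apply, res_ext])

lemma blockEquiv_apply {a : Fin n → ℕ} (hapos : ∀ i, 0 < a i) (v : ℕ)
    (φ : (Fin n → ℝ) ≃ₗ[ℝ] (Fin n → ℝ)) (hφ : φ ∈ OmegaGroup a)
    (x : Fin (Bv a v).card → ℝ) :
    blockEquiv hapos v φ hφ x = resL a v (φ (extL a v x)) := rfl

end blocks

/-! ### block computations on basis vectors -/

lemma extL_single (a : Fin n → ℕ) (v : ℕ) (k : Fin (Bv a v).card) :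
    extL a v (Pi.single k 1) = Pi.single ((eBv a v).symm k).1 1 := by
  funext i
  rw [extL_apply]
  have hai0 : a ((eBv a v).symm k).1 = v := (mem_Bv a).mp ((eBv a v).symm k).2
  by_cases h : a i = v
  · rw [dif_pos h, Pi.single_apply, Pi.single_apply]
    by_cases hii : i = ((eBv a v).symm k).1
    · rw [if_pos hii, if_pos]
      have : (⟨i, (mem_Bv a).mpr h⟩ : ↥(Bv a v)) = (eBv a v).symm k := Subtype.ext hii
      rw [this, Equiv.apply_symm_apply]
    · rw [if_neg hii, if_neg]
      intro hc
      apply hii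
      have : (⟨i, (mem_Bv a).mpr h⟩ : ↥(Bv a v)) = (eBv a v).symm k := by
        rw [← hc, Equiv.symm_apply_apply]
      exact congrArg Subtype.val this
  · rw [dif_neg h, Pi.single_apply, if_neg (fun hc => h (by rw [hc]; exact hai0))]

lemma resL_single (a : Fin n → ℕ) (v : ℕ) (j : Fin n) (h : a j = v) (c : ℝ) :
    resL a v (Pi.single j c) = Pi.single (eBv a v ⟨j, (mem_Bv a).mpr h⟩) c := by
  funext k
  rw [resL_apply, Pi.single_apply, Pi.single_apply]
  by_cases hk : k = eBv a v ⟨j, (mem_Bv a).mpr h⟩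
  · rw [if_pos hk, if_pos]
    subst hk
    rw [Equiv.symm_apply_apply]
  · rw [if_neg hk, if_neg]
    intro hc
    apply hk
    have : (eBv a v).symm k = ⟨j, (mem_Bv a).mpr h⟩ := Subtype.ext hc
    rw [← this, Equiv.apply_symm_apply]

lemma blockEquiv_sp_single {a : Fin n → ℕ} (hapos : ∀ i, 0 < a i)
    {ε : Fin n → Bool} {π : Equiv.Perm (Fin n)} (hπ : ∀ i, a (π i) = a i)
    (hmem : spEquiv ε π ∈ OmegaGroup a) (v : ℕ) (k : Fin (Bv a v).card) :
    blockEquiv hapos v (spEquiv ε π) hmem (Pi.single k 1)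
      = Pi.single
          (eBv a v ⟨π ((eBv a v).symm k).1,
            (mem_Bv a).mpr (by rw [hπ]; exact (mem_Bv a).mp ((eBv a v).symm k).2)⟩)
          (sgn (ε (π ((eBv a v).symm k).1))) := by
  rw [blockEquiv_apply, extL_single, spEquiv_single,
    resL_single a v _ (by rw [hπ]; exact (mem_Bv a).mp ((eBv a v).symm k).2)]

lemma blockEquiv_mem_SP {a : Fin n → ℕ} (hapos : ∀ i, 0 < a i) (v : ℕ)
    (φ : (Fin n → ℝ) ≃ₗ[ℝ] (Fin n → ℝ)) (hφ : φ ∈ OmegaGroup a) :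
    blockEquiv hapos v φ hφ ∈ SPGroup (Bv a v).card := by
  obtain ⟨ε, π, hπ, hφeq⟩ := omega_struct hapos hφ
  subst hφeq
  intro k
  refine ⟨eBv a v ⟨π ((eBv a v).symm k).1,
    (mem_Bv a).mpr (by rw [hπ]; exact (mem_Bv a).mp ((eBv a v).symm k).2)⟩, ?_⟩
  rw [blockEquiv_sp_single hapos hπ hφ v k]
  exact single_sgn_or _ _

/-! ### the homomorphism to the product of block groups -/

noncomputable def PhiHom (a : Fin n → ℕ) (hapos : ∀ i, 0 < a i) :
    ↥(OmegaGroup a) →* ∀ v : ↥(Finset.univ.image a), ↥(SPGroup (Bv a v.1).card) where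
  toFun φ := fun v => ⟨blockEquiv hapos v.1 φ.1 φ.2, blockEquiv_mem_SP hapos v.1 φ.1 φ.2⟩
  map_one' := by
    funext v
    refine Subtype.ext (LinearEquiv.ext fun x => ?_)
    show blockEquiv hapos v.1 (1 : ↥(OmegaGroup a)).1 (1 : ↥(OmegaGroup a)).2 x = x
    rw [blockEquiv_apply]
    show resL a v.1 (extL a v.1 x) = x
    exact res_ext a v.1 x
  map_mul' := by
    intro φ ψ
    funext v
    refine Subtype.ext (LinearEquiv.ext fun x => ?_)
    show blockEquiv hapos v.1 (φ * ψ).1 (φ * ψ).2 x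
      = blockEquiv hapos v.1 φ.1 φ.2 (blockEquiv hapos v.1 ψ.1 ψ.2 x)
    rw [blockEquiv_apply, blockEquiv_apply, blockEquiv_apply]
    show resL a v.1 (φ.1 (ψ.1 (extL a v.1 x)))
      = resL a v.1 (φ.1 (extL a v.1 (resL a v.1 (ψ.1 (extL a v.1 x)))))
    rw [ext_res_phi hapos ψ.2]

lemma PhiHom_injective (a : Fin n → ℕ) (hapos : ∀ i, 0 < a i) :
    Function.Injective (PhiHom a hapos) := by
  rw [injective_iff_map_eq_one]
  intro φ hφ1
  apply Subtype.ext
  apply LinearEquiv.toLinearMap_injective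
  apply Module.Basis.ext (Pi.basisFun ℝ (Fin n))
  intro i
  simp only [Pi.basisFun_apply, LinearEquiv.coe_coe]
  show φ.1 (Pi.single i 1) = Pi.single i 1
  have hv : a i ∈ Finset.univ.image a := Finset.mem_image.mpr ⟨i, Finset.mem_univ i, rfl⟩
  have hblock : blockEquiv hapos (a i) φ.1 φ.2 = 1 := by
    have := congrFun hφ1 ⟨a i, hv⟩
    exact Subtype.ext_iff.mp this
  set k := eBv a (a i) ⟨i, (mem_Bv a).mpr rfl⟩ with hkdef
  have hk : extL a (a i) (Pi.single k 1) = Pi.single i 1 := by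
    rw [extL_single, hkdef, Equiv.symm_apply_apply]
  calc φ.1 (Pi.single i 1) = φ.1 (extL a (a i) (Pi.single k 1)) := by rw [hk]
    _ = extL a (a i) (resL a (a i) (φ.1 (extL a (a i) (Pi.single k 1)))) :=
        (ext_res_phi hapos φ.2 _ _).symm
    _ = extL a (a i) (blockEquiv hapos (a i) φ.1 φ.2 (Pi.single k 1)) := by
        rw [blockEquiv_apply]
    _ = extL a (a i) (Pi.single k 1) := by rw [hblock]; rfl
    _ = Pi.single i 1 := hk

/-! ### gluing block signed permutations to a global one -/

section glue
variable (a : Fin n → ℕ)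
variable (p : ∀ v : ↥(Finset.univ.image a),
  (Fin (Bv a v.1).card → Bool) × Equiv.Perm (Fin (Bv a v.1).card))

noncomputable def permW (w : ℕ) : Equiv.Perm ↥(Bv a w) :=
  if h : w ∈ Finset.univ.image a then
    (eBv a w).trans ((p ⟨w, h⟩).2.trans (eBv a w).symm)
  else 1

noncomputable def epsW (w : ℕ) (s : ↥(Bv a w)) : Bool :=
  if h : w ∈ Finset.univ.image a then (p ⟨w, h⟩).1 (eBv a w s) else true

noncomputable def glueF : Fin n → Fin n :=
  fun i => (permW a p (a i) ⟨i, (mem_Bv a).mpr rfl⟩).1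

noncomputable def glueEps : Fin n → Bool :=
  fun j => epsW a p (a j) ⟨j, (mem_Bv a).mpr rfl⟩

lemma glueF_fiber (i : Fin n) : a (glueF a p i) = a i :=
  (mem_Bv a).mp (permW a p (a i) ⟨i, (mem_Bv a).mpr rfl⟩).2

lemma permW_congr (w1 w2 : ℕ) (hww : w1 = w2) (j : Fin n)
    (hj1 : j ∈ Bv a w1) (hj2 : j ∈ Bv a w2) :
    (permW a p w1 ⟨j, hj1⟩).1 = (permW a p w2 ⟨j, hj2⟩).1 := by subst hww; rfl

lemma epsW_congr (w1 w2 : ℕ) (hww : w1 = w2) (j : Fin n)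
    (hj1 : j ∈ Bv a w1) (hj2 : j ∈ Bv a w2) :
    epsW a p w1 ⟨j, hj1⟩ = epsW a p w2 ⟨j, hj2⟩ := by subst hww; rfl

lemma glueF_spec (w : ℕ) (h : w ∈ Finset.univ.image a) (i : Fin n) (hi : a i = w) :
    glueF a p i = ((eBv a w).symm ((p ⟨w, h⟩).2 (eBv a w ⟨i, (mem_Bv a).mpr hi⟩))).1 := by
  have h1 : glueF a p i = (permW a p w ⟨i, (mem_Bv a).mpr hi⟩).1 :=
    permW_congr a p (a i) w hi i _ _
  rw [h1, permW, dif_pos h]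
  rfl

lemma glueEps_spec (w : ℕ) (h : w ∈ Finset.univ.image a) (j : Fin n) (hj : a j = w) :
    glueEps a p j = (p ⟨w, h⟩).1 (eBv a w ⟨j, (mem_Bv a).mpr hj⟩) := by
  have h1 : glueEps a p j = epsW a p w ⟨j, (mem_Bv a).mpr hj⟩ :=
    epsW_congr a p (a j) w hj j _ _
  rw [h1, epsW, dif_pos h]

lemma glueF_inj : Function.Injective (glueF a p) := by
  intro i i' h
  have hv : a i' = a i := by rw [← glueF_fiber a p i, ← glueF_fiber a p i', h]
  have h3 : (permW a p (a i') ⟨i', (mem_Bv a).mpr rfl⟩).1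
      = (permW a p (a i) ⟨i', (mem_Bv a).mpr hv⟩).1 :=
    permW_congr a p (a i') (a i) hv i' _ _
  have h4 : (permW a p (a i) ⟨i, (mem_Bv a).mpr rfl⟩).1
      = (permW a p (a i) ⟨i', (mem_Bv a).mpr hv⟩).1 := by
    rw [← h3]; exact h
  have h5 := (permW a p (a i)).injective (Subtype.ext h4)
  exact congrArg Subtype.val h5

noncomputable def gluePerm : Equiv.Perm (Fin n) :=
  Equiv.ofBijective (glueF a p) (Finite.injective_iff_bijective.mp (glueF_inj a p))

lemma gluePerm_apply (i : Fin n) : gluePerm a p i = glueF a p i := rfl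

lemma gluePerm_fiber (i : Fin n) : a (gluePerm a p i) = a i := glueF_fiber a p i

end glue

lemma PhiHom_surjective (a : Fin n → ℕ) (hapos : ∀ i, 0 < a i) :
    Function.Surjective (PhiHom a hapos) := by
  intro g
  have hdata : ∀ v : ↥(Finset.univ.image a),
      ∃ q : (Fin (Bv a v.1).card → Bool) × Equiv.Perm (Fin (Bv a v.1).card),
        (g v).1 = spEquiv q.1 q.2 := by
    intro v
    obtain ⟨ε, π, h⟩ := (isSignedPermMap_iff _).mp (g v).2
    exact ⟨(ε, π), h⟩
  choose p hp using hdata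
  have hmem : spEquiv (glueEps a p) (gluePerm a p) ∈ OmegaGroup a :=
    spEquiv_image (gluePerm_fiber a p)
  refine ⟨⟨spEquiv (glueEps a p) (gluePerm a p), hmem⟩, ?_⟩
  funext v
  apply Subtype.ext
  show blockEquiv hapos v.1 _ hmem = (g v).1
  rw [hp v]
  apply LinearEquiv.toLinearMap_injective
  apply Module.Basis.ext (Pi.basisFun ℝ (Fin (Bv a v.1).card))
  intro k
  simp only [Pi.basisFun_apply, LinearEquiv.coe_coe]
  rw [blockEquiv_sp_single hapos (gluePerm_fiber a p) hmem v.1 k, spEquiv_single]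
  have hi0 : a ((eBv a v.1).symm k).1 = v.1 := (mem_Bv a).mp ((eBv a v.1).symm k).2
  have hpv : (⟨v.1, v.2⟩ : ↥(Finset.univ.image a)) = v := rfl
  -- the image index
  have hkk : (⟨((eBv a v.1).symm k).1, (mem_Bv a).mpr hi0⟩ : ↥(Bv a v.1))
      = (eBv a v.1).symm k := Subtype.ext rfl
  have hF : gluePerm a p ((eBv a v.1).symm k).1
      = ((eBv a v.1).symm ((p v).2 k)).1 := by
    rw [gluePerm_apply, glueF_spec a p v.1 v.2 _ hi0, hkk, Equiv.apply_symm_apply]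
  have hidx : ∀ (pf : gluePerm a p ((eBv a v.1).symm k).1 ∈ Bv a v.1),
      eBv a v.1 ⟨gluePerm a p ((eBv a v.1).symm k).1, pf⟩ = (p v).2 k := by
    intro pf
    have : (⟨gluePerm a p ((eBv a v.1).symm k).1, pf⟩ : ↥(Bv a v.1))
        = (eBv a v.1).symm ((p v).2 k) := Subtype.ext hF
    rw [this, Equiv.apply_symm_apply]
  have heps : glueEps a p (gluePerm a p ((eBv a v.1).symm k).1)
      = (p v).1 ((p v).2 k) := by
    have hj : a (gluePerm a p ((eBv a v.1).symm k).1) = v.1 := by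
      rw [gluePerm_fiber a p]; exact hi0
    rw [glueEps_spec a p v.1 v.2 _ hj]
    have : (⟨gluePerm a p ((eBv a v.1).symm k).1, (mem_Bv a).mpr hj⟩ : ↥(Bv a v.1))
        = (eBv a v.1).symm ((p v).2 k) := Subtype.ext hF
    rw [this, Equiv.apply_symm_apply]
  rw [hidx, heps]

/-! ### counting -/

lemma card_SPGroup (m : ℕ) : Nat.card ↥(SPGroup m) = 2 ^ m * m.factorial := by
  classical
  have hbij : Function.Bijective
      (fun q : (Fin m → Bool) × Equiv.Perm (Fin m) =>
        (⟨spEquiv q.1 q.2, (isSignedPermMap_iff _).mpr ⟨q.1, q.2, rfl⟩⟩ : ↥(SPGroup m))) := by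
    constructor
    · rintro ⟨ε, π⟩ ⟨ε', π'⟩ h
      have heq : spEquiv ε π = spEquiv ε' π' := Subtype.ext_iff.mp h
      have hidx : ∀ i, π i = π' i ∧ ε (π i) = ε' (π i) := by
        intro i
        have h1 : (spEquiv ε π) (Pi.single i 1) = (spEquiv ε' π') (Pi.single i 1) := by
          rw [heq]
        rw [spEquiv_single, spEquiv_single] at h1
        have h2 := congrFun h1 (π i)
        rw [Pi.single_apply, Pi.single_apply, if_pos rfl] at h2
        by_cases hππ : π i = π' i
        · refine ⟨hππ, ?_⟩
          rw [if_pos hππ] at h2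
          rw [← hππ] at h2
          exact sgn_inj h2
        · rw [if_neg hππ] at h2
          exact absurd h2 (sgn_ne_zero _)
      have hπeq : π = π' := Equiv.ext fun i => (hidx i).1
      have hεeq : ε = ε' := by
        funext j
        have := (hidx (π.symm j)).2
        rwa [Equiv.apply_symm_apply] at this
      rw [Prod.mk.injEq]
      exact ⟨hεeq, hπeq⟩
    · rintro ⟨φ, hφ⟩
      obtain ⟨ε, π, rfl⟩ := (isSignedPermMap_iff φ).mp hφ
      exact ⟨(ε, π), rfl⟩
  have e := Equiv.ofBijective _ hbij
  rw [← Nat.card_congr e, Nat.card_prod, Nat.card_eq_fintype_card, Nat.card_eq_fintype_card,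
    Fintype.card_perm, Fintype.card_fun]
  simp [Fintype.card_fin]

end

/-- Every linear automorphism of `ℝ^n` preserving `Ξ = Z_{d_1}^{n_1} × ⋯ × Z_{d_r}^{n_r}`
(the blocks being the fibers of the monotone positive bound function `a`) is orthogonal and
acts on each block as a signed permutation of its coordinates; the group `Ω` of all such
automorphisms is isomorphic to the direct product of the groups of signed `n_i × n_i`
permutation matrices and has order `∏ᵢ 2^{n_i} · n_i!`. -/
theorem stmt11 (n : ℕ) (hn : 0 < n) (a : Fin n → ℕ)
    (ha : Monotone a) (hapos : ∀ i, 0 < a i) :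
    (∀ φ : (Fin n → ℝ) ≃ₗ[ℝ] (Fin n → ℝ), φ '' Zprod a = Zprod a →
      (∀ x y : Fin n → ℝ, ∑ i, φ x i * φ y i = ∑ i, x i * y i) ∧
      (∀ i : Fin n, ∃ j : Fin n, a j = a i ∧
        (φ (Pi.single i 1) = Pi.single j 1 ∨ φ (Pi.single i 1) = -Pi.single j 1))) ∧
    ∃ Ω : Subgroup ((Fin n → ℝ) ≃ₗ[ℝ] (Fin n → ℝ)),
      (∀ φ, φ ∈ Ω ↔ φ '' Zprod a = Zprod a) ∧
      Nat.card Ω = ∏ v ∈ Finset.univ.image a,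
        2 ^ (Finset.univ.filter fun i => a i = v).card *
          (Finset.univ.filter fun i => a i = v).card.factorial ∧
      ∃ ΩB : ∀ v : ↥(Finset.univ.image a),
          Subgroup ((Fin (Finset.univ.filter fun i => a i = v.1).card → ℝ) ≃ₗ[ℝ]
            (Fin (Finset.univ.filter fun i => a i = v.1).card → ℝ)),
        (∀ (v : ↥(Finset.univ.image a))
            (φ : (Fin (Finset.univ.filter fun i => a i = v.1).card → ℝ) ≃ₗ[ℝ]
              (Fin (Finset.univ.filter fun i => a i = v.1).card → ℝ)),
          φ ∈ ΩB v ↔ IsSignedPermMap _ φ) ∧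
        Nonempty (Ω ≃* ∀ v, ΩB v) := by
  classical
  constructor
  · intro φ hφ
    obtain ⟨ε, π, hπ, rfl⟩ := omega_struct hapos hφ
    refine ⟨fun x y => spEquiv_orth x y, fun i => ⟨π i, hπ i, ?_⟩⟩
    rw [spEquiv_single]
    exact single_sgn_or _ _
  · have hbij : Function.Bijective (PhiHom a hapos) :=
      ⟨PhiHom_injective a hapos, PhiHom_surjective a hapos⟩
    refine ⟨OmegaGroup a, fun φ => Iff.rfl, ?_,
      fun v => SPGroup (Bv a v.1).card, fun v φ => Iff.rfl,
      ⟨(MulEquiv.ofBijective (PhiHom a hapos) hbij :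
        ↥(OmegaGroup a) ≃* ∀ v : ↥(Finset.univ.image a), ↥(SPGroup (Bv a v.1).card))⟩⟩
    calc Nat.card ↥(OmegaGroup a)
        = Nat.card (∀ v : ↥(Finset.univ.image a), ↥(SPGroup (Bv a v.1).card)) :=
          Nat.card_congr (MulEquiv.ofBijective (PhiHom a hapos) hbij).toEquiv
      _ = ∏ v : ↥(Finset.univ.image a), Nat.card ↥(SPGroup (Bv a v.1).card) :=
          Nat.card_pi
      _ = ∏ v : ↥(Finset.univ.image a), 2 ^ (Bv a v.1).card * (Bv a v.1).card.factorial :=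
          Finset.prod_congr rfl fun v _ => card_SPGroup _
      _ = ∏ v ∈ Finset.univ.image a, 2 ^ (Bv a v).card * (Bv a v).card.factorial :=
          Finset.prod_coe_sort (Finset.univ.image a)
            (fun v => 2 ^ (Bv a v).card * (Bv a v).card.factorial)
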